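/- Let n ≥ 11 and let G be a finite group isomorphic to the alternating group Alt(n) or to the symmetric group Sym(n). Then there is no finite set Ω with a G-action such that (G, Ω) satisfies Hypothesis (3fix). -/

import Mathlib

/-- Hypothesis (3fix): the action of `G` on `Ω` is faithful and transitive, every element
of `G` fixing at least four distinct points of `Ω` is the identity, and some nontrivial
element of `G` fixes at least three distinct points of `Ω`. -/
def Hyp3fix (G : Type*) [Group G] (Ω : Type*) [MulAction G Ω] : Prop :=
  MulAction.IsPretransitive G Ω ∧
  (∀ g : G, (∀ ω : Ω, g • ω = ω) → g = 1) ∧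
  (∀ g : G, ∀ a b c d : Ω, a ≠ b → a ≠ c → a ≠ d → b ≠ c → b ≠ d → c ≠ d →
      g • a = a → g • b = b → g • c = c → g • d = d → g = 1) ∧
  (∃ g : G, g ≠ 1 ∧ ∃ a b c : Ω, a ≠ b ∧ a ≠ c ∧ b ≠ c ∧
      g • a = a ∧ g • b = b ∧ g • c = c)

namespace H3F

open Equiv

variable {β : Type*} [DecidableEq β]

/-- the 3-cycle (p q r) as a product of two swaps -/
def c3 (p q r : β) : Equiv.Perm β := Equiv.swap p q * Equiv.swap q r

/-- the 5-cycle (a b c d e) as a product of four swaps -/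
def c5 (a b c d e : β) : Equiv.Perm β :=
  Equiv.swap a b * Equiv.swap b c * Equiv.swap c d * Equiv.swap d e

variable {a b c d e p q r x : β}

lemma c3_apply_p (hpq : p ≠ q) (hpr : p ≠ r) : c3 p q r p = q := by
  simp only [c3, Equiv.Perm.mul_apply]
  rw [Equiv.swap_apply_of_ne_of_ne hpq hpr, Equiv.swap_apply_left]

lemma c3_apply_q (hpr : p ≠ r) (hqr : q ≠ r) : c3 p q r q = r := by
  simp only [c3, Equiv.Perm.mul_apply]
  rw [Equiv.swap_apply_left, Equiv.swap_apply_of_ne_of_ne (Ne.symm hpr) (Ne.symm hqr)]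

lemma c3_apply_r : c3 p q r r = p := by
  simp only [c3, Equiv.Perm.mul_apply]
  rw [Equiv.swap_apply_right, Equiv.swap_apply_right]

lemma c3_apply_other (hp : x ≠ p) (hq : x ≠ q) (hr : x ≠ r) : c3 p q r x = x := by
  simp only [c3, Equiv.Perm.mul_apply]
  rw [Equiv.swap_apply_of_ne_of_ne hq hr, Equiv.swap_apply_of_ne_of_ne hp hq]

lemma c3_ne_one (hpq : p ≠ q) (hpr : p ≠ r) : c3 p q r ≠ 1 := by
  intro h
  have := c3_apply_p hpq hpr
  rw [h] at this
  exact hpq (by simpa using this)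

lemma c5_apply_a (hab : a ≠ b) (hac : a ≠ c) (had : a ≠ d) (hae : a ≠ e) :
    c5 a b c d e a = b := by
  simp only [c5, Equiv.Perm.mul_apply]
  rw [Equiv.swap_apply_of_ne_of_ne had hae, Equiv.swap_apply_of_ne_of_ne hac had,
    Equiv.swap_apply_of_ne_of_ne hab hac, Equiv.swap_apply_left]

lemma c5_apply_b (hbc : b ≠ c) (hbd : b ≠ d) (hbe : b ≠ e) (hac : a ≠ c) :
    c5 a b c d e b = c := by
  simp only [c5, Equiv.Perm.mul_apply]
  rw [Equiv.swap_apply_of_ne_of_ne hbd hbe, Equiv.swap_apply_of_ne_of_ne hbc hbd,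
    Equiv.swap_apply_left, Equiv.swap_apply_of_ne_of_ne (Ne.symm hac) (Ne.symm hbc)]

lemma c5_apply_c (hcd : c ≠ d) (hce : c ≠ e) (hbd : b ≠ d) (had : a ≠ d) :
    c5 a b c d e c = d := by
  simp only [c5, Equiv.Perm.mul_apply]
  rw [Equiv.swap_apply_of_ne_of_ne hcd hce, Equiv.swap_apply_left,
    Equiv.swap_apply_of_ne_of_ne (Ne.symm hbd) (Ne.symm hcd),
    Equiv.swap_apply_of_ne_of_ne (Ne.symm had) (Ne.symm hbd)]

lemma c5_apply_d (hde : d ≠ e) (hce : c ≠ e) (hbe : b ≠ e) (hae : a ≠ e) :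
    c5 a b c d e d = e := by
  simp only [c5, Equiv.Perm.mul_apply]
  rw [Equiv.swap_apply_left, Equiv.swap_apply_of_ne_of_ne (Ne.symm hce) (Ne.symm hde),
    Equiv.swap_apply_of_ne_of_ne (Ne.symm hbe) (Ne.symm hce),
    Equiv.swap_apply_of_ne_of_ne (Ne.symm hae) (Ne.symm hbe)]

lemma c5_apply_e : c5 a b c d e e = a := by
  simp only [c5, Equiv.Perm.mul_apply]
  rw [Equiv.swap_apply_right, Equiv.swap_apply_right, Equiv.swap_apply_right,
    Equiv.swap_apply_right]

lemma c5_apply_other (ha : x ≠ a) (hb : x ≠ b) (hc : x ≠ c) (hd : x ≠ d) (he : x ≠ e) :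
    c5 a b c d e x = x := by
  simp only [c5, Equiv.Perm.mul_apply]
  rw [Equiv.swap_apply_of_ne_of_ne hd he, Equiv.swap_apply_of_ne_of_ne hc hd,
    Equiv.swap_apply_of_ne_of_ne hb hc, Equiv.swap_apply_of_ne_of_ne ha hb]

section Distinct

variable (hab : a ≠ b) (hac : a ≠ c) (had : a ≠ d) (hae : a ≠ e)
  (hbc : b ≠ c) (hbd : b ≠ d) (hbe : b ≠ e) (hcd : c ≠ d) (hce : c ≠ e) (hde : d ≠ e)

include hab hac had hae hbc hbd hbe hcd hce hde in
lemma c5_pow_five : (c5 a b c d e) ^ 5 = 1 := by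
  have key : ∀ y, c5 a b c d e (c5 a b c d e (c5 a b c d e (c5 a b c d e
      (c5 a b c d e y)))) = y := by
    intro y
    by_cases hy1 : y = a
    · subst hy1
      rw [c5_apply_a hab hac had hae, c5_apply_b hbc hbd hbe hac,
        c5_apply_c hcd hce hbd had, c5_apply_d hde hce hbe hae, c5_apply_e]
    by_cases hy2 : y = b
    · subst hy2
      rw [c5_apply_b hbc hbd hbe hac, c5_apply_c hcd hce hbd had,
        c5_apply_d hde hce hbe hae, c5_apply_e, c5_apply_a hab hac had hae]
    by_cases hy3 : y = c
    · subst hy3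
      rw [c5_apply_c hcd hce hbd had, c5_apply_d hde hce hbe hae, c5_apply_e,
        c5_apply_a hab hac had hae, c5_apply_b hbc hbd hbe hac]
    by_cases hy4 : y = d
    · subst hy4
      rw [c5_apply_d hde hce hbe hae, c5_apply_e, c5_apply_a hab hac had hae,
        c5_apply_b hbc hbd hbe hac, c5_apply_c hcd hce hbd had]
    by_cases hy5 : y = e
    · subst hy5
      rw [c5_apply_e, c5_apply_a hab hac had hae, c5_apply_b hbc hbd hbe hac,
        c5_apply_c hcd hce hbd had, c5_apply_d hde hce hbe hae]
    · rw [c5_apply_other hy1 hy2 hy3 hy4 hy5, c5_apply_other hy1 hy2 hy3 hy4 hy5,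
        c5_apply_other hy1 hy2 hy3 hy4 hy5, c5_apply_other hy1 hy2 hy3 hy4 hy5,
        c5_apply_other hy1 hy2 hy3 hy4 hy5]
  ext y
  have : ((c5 a b c d e) ^ 5) y = c5 a b c d e (c5 a b c d e (c5 a b c d e (c5 a b c d e
      (c5 a b c d e y)))) := by
    rw [show (5:ℕ) = 4 + 1 from rfl, pow_succ, show (4:ℕ) = 3 + 1 from rfl, pow_succ,
      show (3:ℕ) = 2 + 1 from rfl, pow_succ, show (2:ℕ) = 1 + 1 from rfl, pow_succ, pow_one]
    simp [Equiv.Perm.mul_apply]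
  rw [this, key]
  simp

include hab hac had hae hbc hbd hbe hcd hce hde in
lemma c3_eq_c5_mul_c5 : c3 a b c = c5 a d c e b * c5 a e c b d := by
  ext y
  rw [Equiv.Perm.mul_apply]
  by_cases hy1 : y = a
  · rw [hy1, c3_apply_p hab hac, c5_apply_a hae hac hab had,
      c5_apply_d (Ne.symm hbe) (Ne.symm hbc) (Ne.symm hbd) hab]
  by_cases hy2 : y = b
  · rw [hy2, c3_apply_q hac hbc, c5_apply_d hbd hcd (Ne.symm hde) had,
      c5_apply_b (Ne.symm hcd) hde (Ne.symm hbd) hac]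
  by_cases hy3 : y = c
  · rw [hy3, c3_apply_r, c5_apply_c (Ne.symm hbc) hcd (Ne.symm hbe) hab, c5_apply_e]
  by_cases hy4 : y = d
  · rw [hy4, c3_apply_other (Ne.symm had) (Ne.symm hbd) (Ne.symm hcd), c5_apply_e,
      c5_apply_a had hac hae hab]
  by_cases hy5 : y = e
  · rw [hy5, c3_apply_other (Ne.symm hae) (Ne.symm hbe) (Ne.symm hce),
      c5_apply_b (Ne.symm hce) (Ne.symm hbe) (Ne.symm hde) hac,
      c5_apply_c hce (Ne.symm hbc) hde hae]
  · rw [c3_apply_other hy1 hy2 hy3, c5_apply_other hy1 hy5 hy3 hy2 hy4,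
      c5_apply_other hy1 hy4 hy3 hy5 hy2]

end Distinct

end H3F

namespace H3F

variable {β : Type*} [DecidableEq β] {a b c d e p q r x : β}

lemma c3_sign [Fintype β] (hpq : p ≠ q) (hqr : q ≠ r) :
    Equiv.Perm.sign (c3 p q r) = 1 := by
  simp [c3, Equiv.Perm.sign_swap, hpq, hqr]

lemma c5_sign [Fintype β] (hab : a ≠ b) (hbc : b ≠ c) (hcd : c ≠ d) (hde : d ≠ e) :
    Equiv.Perm.sign (c5 a b c d e) = 1 := by
  simp [c5, Equiv.Perm.sign_swap, hab, hbc, hcd, hde]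

/-- The working context: a group of permutations of `Fin n` containing the alternating
group, acting faithfully on `Ω` with all four-point stabilizers trivial. -/
structure Ctx (n : ℕ) (Ω : Type*) where
  H : Subgroup (Equiv.Perm (Fin n))
  hle : alternatingGroup (Fin n) ≤ H
  ψ : H →* Equiv.Perm Ω
  hfaith : ∀ σ, (∀ ω, ψ σ ω = ω) → σ = 1
  h4 : ∀ (σ : H) (a b c d : Ω), a ≠ b → a ≠ c → a ≠ d → b ≠ c → b ≠ d → c ≠ d →
    ψ σ a = a → ψ σ b = b → ψ σ c = c → ψ σ d = d → σ = 1

variable {n : ℕ} {Ω : Type*} (C : Ctx n Ω)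

lemma Ctx.memH {σ : Equiv.Perm (Fin n)} (h : Equiv.Perm.sign σ = 1) : σ ∈ C.H :=
  C.hle (Equiv.Perm.mem_alternatingGroup.mpr h)

lemma Ctx.psi_mul (σ τ : C.H) (ω : Ω) : C.ψ (σ * τ) ω = C.ψ σ (C.ψ τ ω) := by
  rw [map_mul]; rfl

lemma Ctx.ne_one {σ : Equiv.Perm (Fin n)} {hσ : σ ∈ C.H} (h : σ ≠ 1) :
    (⟨σ, hσ⟩ : C.H) ≠ 1 := by
  intro hh; exact h (congrArg Subtype.val hh)

/-- order-5 elements commuting with a nontrivial element fix all its fixed points -/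
lemma Ctx.KL {x σ : C.H} (hx : x ≠ 1) (h5 : σ ^ 5 = 1)
    {ω : Ω} (hcs : Commute σ x) (hω : C.ψ x ω = ω) : C.ψ σ ω = ω := by
  by_contra hne
  set π : Equiv.Perm Ω := C.ψ σ with hπ
  have hpow : ∀ k : ℕ, C.ψ (σ ^ k) ω = (π ^ k) ω := by
    intro k; rw [map_pow]
  have hfix : ∀ k : ℕ, C.ψ x ((π ^ k) ω) = (π ^ k) ω := by
    intro k
    have hcomm : x * σ ^ k = σ ^ k * x := (hcs.symm.pow_right k)
    have : C.ψ x (C.ψ (σ ^ k) ω) = C.ψ (σ ^ k) (C.ψ x ω) := by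
      rw [← C.psi_mul, hcomm, C.psi_mul]
    rwa [hω, hpow] at this
  have hπ5 : π ^ 5 = 1 := by rw [hπ, ← map_pow, h5, map_one]
  have h1 : π ω ≠ ω := hne
  have h6 : (π ^ 6) ω = π ω := by
    rw [show (6 : ℕ) = 5 + 1 from rfl, pow_succ, hπ5, one_mul]
  have h2 : (π ^ 2) ω ≠ ω := by
    intro h
    apply h1
    have : (π ^ 6) ω = ω := by
      rw [show (6 : ℕ) = 2 + (2 + 2) from rfl, pow_add, pow_add]
      simp only [Equiv.Perm.mul_apply]
      rw [h, h, h]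
    rwa [h6] at this
  have h3 : (π ^ 3) ω ≠ ω := by
    intro h
    apply h1
    have : (π ^ 6) ω = ω := by
      rw [show (6 : ℕ) = 3 + 3 from rfl, pow_add]
      simp only [Equiv.Perm.mul_apply]
      rw [h, h]
    rwa [h6] at this
  have key : ∀ i j : ℕ, i < j → j - i ≤ 3 → (π ^ i) ω ≠ (π ^ j) ω := by
    intro i j hij hle heq
    have : (π ^ i) ((π ^ (j - i)) ω) = (π ^ i) ω := by
      rw [← Equiv.Perm.mul_apply, ← pow_add]
      rw [show i + (j - i) = j from by omega]
      exact heq.symm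
    have hfix0 : (π ^ (j - i)) ω = ω := (π ^ i).injective this
    interval_cases h : j - i
    · omega
    · exact h1 (by simpa using hfix0)
    · exact h2 hfix0
    · exact h3 hfix0
  have hx1 := C.h4 x ω (π ω) ((π ^ 2) ω) ((π ^ 3) ω)
    (by simpa using key 0 1 (by omega) (by omega))
    (by simpa using key 0 2 (by omega) (by omega))
    (by simpa using key 0 3 (by omega) (by omega))
    (key 1 2 (by omega) (by omega)) (key 1 3 (by omega) (by omega))
    (key 2 3 (by omega) (by omega))
    hω (by simpa using hfix 1) (hfix 2) (hfix 3)
  exact hx hx1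

end H3F

namespace H3F

variable {n : ℕ} {Ω : Type*} (C : Ctx n Ω)

lemma Ctx.coe_pow {σ : Equiv.Perm (Fin n)} (hσ : σ ∈ C.H) (k : ℕ) :
    (⟨σ, hσ⟩ : C.H) ^ k = ⟨σ ^ k, pow_mem hσ k⟩ := by
  apply Subtype.ext
  simp

/-- transfer lemma: a 3-cycle whose support is disjoint from that of a nontrivial
element `x` (with enough room) fixes every fixed point of `x`. -/
lemma Ctx.A3 {x : Equiv.Perm (Fin n)} (hxH : x ∈ C.H) (hx1 : x ≠ 1)
    {p q r y z : Fin n}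
    (hpq : p ≠ q) (hpr : p ≠ r) (hpy : p ≠ y) (hpz : p ≠ z)
    (hqr : q ≠ r) (hqy : q ≠ y) (hqz : q ≠ z)
    (hry : r ≠ y) (hrz : r ≠ z) (hyz : y ≠ z)
    (hfp : x p = p) (hfq : x q = q) (hfr : x r = r) (hfy : x y = y) (hfz : x z = z)
    {ω : Ω} (hω : C.ψ ⟨x, hxH⟩ ω = ω) {hc3H : c3 p q r ∈ C.H} :
    C.ψ ⟨c3 p q r, hc3H⟩ ω = ω := by
  -- the two 5-cycles
  set s1 := c5 p y r z q with hs1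
  set s2 := c5 p z r q y with hs2
  have hid : c3 p q r = s1 * s2 :=
    c3_eq_c5_mul_c5 hpq hpr hpy hpz hqr hqy hqz hry hrz hyz
  have hm1 : s1 ∈ C.H := C.memH (c5_sign hpy (Ne.symm hry) hrz (Ne.symm hqz))
  have hm2 : s2 ∈ C.H := C.memH (c5_sign hpz (Ne.symm hrz) (Ne.symm hqr) hqy)
  have h51 : s1 ^ 5 = 1 :=
    c5_pow_five hpy hpr hpz hpq (Ne.symm hry) hyz (Ne.symm hqy) hrz (Ne.symm hqr)
      (Ne.symm hqz)
  have h52 : s2 ^ 5 = 1 :=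
    c5_pow_five hpz hpr hpq hpy (Ne.symm hrz) (Ne.symm hqz) (Ne.symm hyz) (Ne.symm hqr)
      hry hqy
  have hdisj : ∀ s : Equiv.Perm (Fin n),
      (∀ t : Fin n, t ≠ p → t ≠ q → t ≠ r → t ≠ y → t ≠ z → s t = t) →
      Commute s x := by
    intro s hs
    apply Equiv.Perm.Disjoint.commute
    intro t
    by_cases h1 : t = p
    · exact Or.inr (h1 ▸ hfp)
    by_cases h2 : t = q
    · exact Or.inr (h2 ▸ hfq)
    by_cases h3 : t = r
    · exact Or.inr (h3 ▸ hfr)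
    by_cases h4 : t = y
    · exact Or.inr (h4 ▸ hfy)
    by_cases h5 : t = z
    · exact Or.inr (h5 ▸ hfz)
    · exact Or.inl (hs t h1 h2 h3 h4 h5)
  have hc1 : Commute s1 x := by
    apply hdisj
    intro t h1 h2 h3 h4 h5
    exact c5_apply_other h1 h4 h3 h5 h2
  have hc2 : Commute s2 x := by
    apply hdisj
    intro t h1 h2 h3 h4 h5
    exact c5_apply_other h1 h5 h3 h2 h4
  -- subgroup versions
  have hk2 : C.ψ ⟨s2, hm2⟩ ω = ω := by
    refine C.KL (C.ne_one hx1) ?_ ?_ hω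
    · rw [C.coe_pow]; exact Subtype.ext h52
    · exact Subtype.ext hc2
  have hk1 : C.ψ ⟨s1, hm1⟩ ω = ω := by
    refine C.KL (C.ne_one hx1) ?_ ?_ hω
    · rw [C.coe_pow]; exact Subtype.ext h51
    · exact Subtype.ext hc1
  have : (⟨c3 p q r, hc3H⟩ : C.H) = ⟨s1, hm1⟩ * ⟨s2, hm2⟩ := Subtype.ext hid
  rw [this, C.psi_mul, hk2, hk1]

end H3F

namespace H3F

variable {n : ℕ} {Ω : Type*} (C : Ctx n Ω)

lemma pick_out {m : ℕ} (s : Finset (Fin m)) (h : s.card < m) : ∃ x, x ∉ s := by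
  have h2 : 0 < sᶜ.card := by
    rw [Finset.card_compl]
    simp only [Fintype.card_fin]
    omega
  obtain ⟨x, hx⟩ := Finset.card_pos.mp h2
  exact ⟨x, Finset.mem_compl.mp hx⟩

lemma card3 {α : Type*} [DecidableEq α] {p q r : α} : ({p, q, r} : Finset α).card ≤ 3 := by
  apply le_trans (Finset.card_insert_le _ _)
  apply Nat.succ_le_succ
  apply le_trans (Finset.card_insert_le _ _)
  apply Nat.succ_le_succ
  simp

lemma card6 {α : Type*} [DecidableEq α] {a b c d e f : α} :
    ({a, b, c, d, e, f} : Finset α).card ≤ 6 := by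
  apply le_trans (Finset.card_insert_le _ _)
  apply Nat.succ_le_succ
  apply le_trans (Finset.card_insert_le _ _)
  apply Nat.succ_le_succ
  apply le_trans (Finset.card_insert_le _ _)
  apply Nat.succ_le_succ
  exact card3

lemma c3_support_le {m : ℕ} {p q r : Fin m} :
    (c3 p q r).support ⊆ {p, q, r} := by
  intro t ht
  by_contra hmem
  simp only [Finset.mem_insert, Finset.mem_singleton, not_or] at hmem
  exact (Equiv.Perm.mem_support.mp ht) (c3_apply_other hmem.1 hmem.2.1 hmem.2.2)

lemma c3_support_card {m : ℕ} {p q r : Fin m} : (c3 p q r).support.card ≤ 3 :=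
  le_trans (Finset.card_le_card c3_support_le) card3

/-- one step of the transfer chain, picking spare points automatically -/
lemma Ctx.step (hn : 11 ≤ n) {x : Equiv.Perm (Fin n)} (hxH : x ∈ C.H) (hx1 : x ≠ 1)
    (hroom : x.support.card + 5 ≤ n)
    {p q r : Fin n} (hpq : p ≠ q) (hpr : p ≠ r) (hqr : q ≠ r)
    (hfp : x p = p) (hfq : x q = q) (hfr : x r = r)
    {ω : Ω} (hω : C.ψ ⟨x, hxH⟩ ω = ω) (hH : c3 p q r ∈ C.H) :
    C.ψ ⟨c3 p q r, hH⟩ ω = ω := by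
  obtain ⟨y, hy⟩ := pick_out (x.support ∪ {p, q, r}) (by
    have h1 := Finset.card_union_le x.support ({p, q, r} : Finset (Fin n))
    have h2 : ({p, q, r} : Finset (Fin n)).card ≤ 3 := card3
    omega)
  obtain ⟨z, hz⟩ := pick_out (insert y (x.support ∪ {p, q, r})) (by
    have h1 := Finset.card_insert_le y (x.support ∪ {p, q, r})
    have h2 := Finset.card_union_le x.support ({p, q, r} : Finset (Fin n))
    have h3 : ({p, q, r} : Finset (Fin n)).card ≤ 3 := card3
    omega)
  simp only [Finset.mem_insert, Finset.mem_union, Finset.mem_singleton, not_or] at hy hz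
  have hpy : p ≠ y := fun h => hy.2.1 h.symm
  have hpz : p ≠ z := fun h => hz.2.2.1 h.symm
  have hqy : q ≠ y := fun h => hy.2.2.1 h.symm
  have hqz : q ≠ z := fun h => hz.2.2.2.1 h.symm
  have hry : r ≠ y := fun h => hy.2.2.2 h.symm
  have hrz : r ≠ z := fun h => hz.2.2.2.2 h.symm
  have hyz : y ≠ z := fun h => hz.1 h.symm
  have hfy : x y = y := Equiv.Perm.notMem_support.mp hy.1
  have hfz : x z = z := Equiv.Perm.notMem_support.mp hz.2.1
  exact C.A3 hxH hx1 hpq hpr hpy hpz hqr hqy hqz hry hrz hyz hfp hfq hfr hfy hfz hω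

/-- if some nontrivial small-support element fixes a point, every 3-cycle fixes it -/
lemma Ctx.all_c3_fix (hn : 11 ≤ n) {σ : Equiv.Perm (Fin n)} (hσH : σ ∈ C.H) (hσ1 : σ ≠ 1)
    (hroom : σ.support.card + 5 ≤ n) {ω₁ : Ω} (hω₁ : C.ψ ⟨σ, hσH⟩ ω₁ = ω₁)
    {p' q' r' : Fin n} (hpq' : p' ≠ q') (hpr' : p' ≠ r') (hqr' : q' ≠ r')
    (hH' : c3 p' q' r' ∈ C.H) : C.ψ ⟨c3 p' q' r', hH'⟩ ω₁ = ω₁ := by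
  obtain ⟨p1, hp1⟩ := pick_out σ.support (by omega)
  obtain ⟨p2, hp2⟩ := pick_out (insert p1 σ.support) (by
    have := Finset.card_insert_le p1 σ.support; omega)
  obtain ⟨p3, hp3⟩ := pick_out (insert p2 (insert p1 σ.support)) (by
    have h1 := Finset.card_insert_le p2 (insert p1 σ.support)
    have h2 := Finset.card_insert_le p1 σ.support; omega)
  simp only [Finset.mem_insert, not_or] at hp2 hp3
  have h12 : p1 ≠ p2 := fun h => hp2.1 h.symm
  have h13 : p1 ≠ p3 := fun h => hp3.2.1 h.symm
  have h23 : p2 ≠ p3 := fun h => hp3.1 h.symm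
  have hmem1 : c3 p1 p2 p3 ∈ C.H := C.memH (c3_sign h12 h23)
  have ht1 : C.ψ ⟨c3 p1 p2 p3, hmem1⟩ ω₁ = ω₁ :=
    C.step hn hσH hσ1 hroom h12 h13 h23 (Equiv.Perm.notMem_support.mp hp1)
      (Equiv.Perm.notMem_support.mp hp2.2) (Equiv.Perm.notMem_support.mp hp3.2.2) hω₁ hmem1
  have hB : ({p1, p2, p3, p', q', r'} : Finset (Fin n)).card ≤ 6 := card6
  obtain ⟨m1, hm1⟩ := pick_out ({p1, p2, p3, p', q', r'} : Finset (Fin n)) (by omega)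
  obtain ⟨m2, hm2⟩ := pick_out (insert m1 ({p1, p2, p3, p', q', r'} : Finset (Fin n))) (by
    have := Finset.card_insert_le m1 ({p1, p2, p3, p', q', r'} : Finset (Fin n)); omega)
  obtain ⟨m3, hm3⟩ := pick_out (insert m2 (insert m1
      ({p1, p2, p3, p', q', r'} : Finset (Fin n)))) (by
    have h1 := Finset.card_insert_le m2 (insert m1 ({p1, p2, p3, p', q', r'} : Finset (Fin n)))
    have h2 := Finset.card_insert_le m1 ({p1, p2, p3, p', q', r'} : Finset (Fin n)); omega)
  simp only [Finset.mem_insert, Finset.mem_singleton, not_or] at hm1 hm2 hm3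
  have hm12 : m1 ≠ m2 := fun h => hm2.1 h.symm
  have hm13 : m1 ≠ m3 := fun h => hm3.2.1 h.symm
  have hm23 : m2 ≠ m3 := fun h => hm3.1 h.symm
  have hmem2 : c3 m1 m2 m3 ∈ C.H := C.memH (c3_sign hm12 hm23)
  have ht2 : C.ψ ⟨c3 m1 m2 m3, hmem2⟩ ω₁ = ω₁ := by
    refine C.step hn hmem1 (c3_ne_one h12 h13) (by have := @c3_support_card n p1 p2 p3; omega)
      hm12 hm13 hm23 ?_ ?_ ?_ ht1 hmem2
    · exact c3_apply_other hm1.1 hm1.2.1 hm1.2.2.1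
    · exact c3_apply_other hm2.2.1 hm2.2.2.1 hm2.2.2.2.1
    · exact c3_apply_other hm3.2.2.1 hm3.2.2.2.1 hm3.2.2.2.2.1
  refine C.step hn hmem2 (c3_ne_one hm12 hm13) (by have := @c3_support_card n m1 m2 m3; omega)
    hpq' hpr' hqr' ?_ ?_ ?_ ht2 hH'
  · exact c3_apply_other (fun h => hm1.2.2.2.1 h.symm) (fun h => hm2.2.2.2.2.1 h.symm)
      (fun h => hm3.2.2.2.2.2.1 h.symm)
  · exact c3_apply_other (fun h => hm1.2.2.2.2.1 h.symm) (fun h => hm2.2.2.2.2.2.1 h.symm)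
      (fun h => hm3.2.2.2.2.2.2.1 h.symm)
  · exact c3_apply_other (fun h => hm1.2.2.2.2.2 h.symm) (fun h => hm2.2.2.2.2.2.2 h.symm)
      (fun h => hm3.2.2.2.2.2.2.2 h.symm)

end H3F

namespace H3F

variable {n : ℕ} {Ω : Type*} (C : Ctx n Ω)

/-- the non-FPF case is impossible -/
lemma Ctx.notFPF (hn : 11 ≤ n)
    (htrans : ∀ ω ω' : Ω, ∃ τ : C.H, C.ψ τ ω = ω')
    {σ : Equiv.Perm (Fin n)} (hσH : σ ∈ C.H) (hσ1 : σ ≠ 1)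
    (hroom : σ.support.card + 5 ≤ n) {ω₁ : Ω} (hω₁ : C.ψ ⟨σ, hσH⟩ ω₁ = ω₁) : False := by
  have h11 : (11 : ℕ) ≤ n := hn
  set i0 : Fin n := ⟨0, by omega⟩ with hi0
  set i1 : Fin n := ⟨1, by omega⟩ with hi1
  set i2 : Fin n := ⟨2, by omega⟩ with hi2
  have h01 : i0 ≠ i1 := by simp [hi0, hi1, Fin.ext_iff]
  have h02 : i0 ≠ i2 := by simp [hi0, hi2, Fin.ext_iff]
  have h12 : i1 ≠ i2 := by simp [hi1, hi2, Fin.ext_iff]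
  have hmem : c3 i0 i1 i2 ∈ C.H := C.memH (c3_sign h01 h12)
  have hall : ∀ ω : Ω, C.ψ ⟨c3 i0 i1 i2, hmem⟩ ω = ω := by
    intro ω
    obtain ⟨τ, hτ⟩ := htrans ω₁ ω
    set v : Equiv.Perm (Fin n) := (τ : Equiv.Perm (Fin n)) with hv
    have hconj : (τ⁻¹ * ⟨c3 i0 i1 i2, hmem⟩ * τ : C.H) =
        ⟨c3 (v⁻¹ i0) (v⁻¹ i1) (v⁻¹ i2), by
          have : c3 (v⁻¹ i0) (v⁻¹ i1) (v⁻¹ i2) = v⁻¹ * c3 i0 i1 i2 * v := by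
            simp only [c3]
            rw [Equiv.swap_apply_apply, Equiv.swap_apply_apply]
            group
          rw [this]
          exact mul_mem (mul_mem (inv_mem τ.2) hmem) τ.2⟩ := by
      apply Subtype.ext
      simp only [Subgroup.coe_mul, Subgroup.coe_inv, c3]
      rw [Equiv.swap_apply_apply, Equiv.swap_apply_apply]
      group
      rfl
    have hfixconj : C.ψ (τ⁻¹ * ⟨c3 i0 i1 i2, hmem⟩ * τ) ω₁ = ω₁ := by
      rw [hconj]
      exact C.all_c3_fix hn hσH hσ1 hroom hω₁
        (fun h => h01 (v⁻¹.injective h)) (fun h => h02 (v⁻¹.injective h))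
        (fun h => h12 (v⁻¹.injective h)) _
    have : C.ψ ⟨c3 i0 i1 i2, hmem⟩ (C.ψ τ ω₁) = C.ψ τ ω₁ := by
      have expand : C.ψ τ (C.ψ (τ⁻¹ * ⟨c3 i0 i1 i2, hmem⟩ * τ) ω₁) =
          C.ψ ⟨c3 i0 i1 i2, hmem⟩ (C.ψ τ ω₁) := by
        rw [← C.psi_mul, ← C.psi_mul]
        have : τ * (τ⁻¹ * ⟨c3 i0 i1 i2, hmem⟩ * τ) = ⟨c3 i0 i1 i2, hmem⟩ * τ := by group
        rw [this, C.psi_mul]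
      rw [← expand, hfixconj]
    rwa [hτ] at this
  have := C.hfaith _ hall
  have hval : c3 i0 i1 i2 = 1 := congrArg Subtype.val this
  exact c3_ne_one h01 h02 hval

end H3F

namespace H3F

/-- structure of a permutation of a 3-point set -/
lemma orb3 {Ω : Type*} (π : Equiv.Perm Ω) {a b c : Ω} (hab : a ≠ b) (hac : a ≠ c)
    (hbc : b ≠ c) (ha : π a = a ∨ π a = b ∨ π a = c) (hb : π b = a ∨ π b = b ∨ π b = c)
    (hc : π c = a ∨ π c = b ∨ π c = c) :
    (π a = a ∧ π b = b ∧ π c = c) ∨ (π a = a ∧ π b = c ∧ π c = b) ∨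
    (π a = b ∧ π b = a ∧ π c = c) ∨ (π a = c ∧ π b = b ∧ π c = a) ∨
    (π a = b ∧ π b = c ∧ π c = a) ∨ (π a = c ∧ π b = a ∧ π c = b) := by
  have iab : π a = π b → a = b := fun h => π.injective h
  have iac : π a = π c → a = c := fun h => π.injective h
  have ibc : π b = π c → b = c := fun h => π.injective h
  rcases ha with h1 | h1 | h1 <;> rcases hb with h2 | h2 | h2 <;> rcases hc with h3 | h3 | h3
  · exact absurd (iab (h1.trans h2.symm)) hab
  · exact absurd (iab (h1.trans h2.symm)) hab
  · exact absurd (iab (h1.trans h2.symm)) hab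
  · exact absurd (iac (h1.trans h3.symm)) hac
  · exact absurd (ibc (h2.trans h3.symm)) hbc
  · exact Or.inl ⟨h1, h2, h3⟩
  · exact absurd (iac (h1.trans h3.symm)) hac
  · exact Or.inr (Or.inl ⟨h1, h2, h3⟩)
  · exact absurd (ibc (h2.trans h3.symm)) hbc
  · exact absurd (ibc (h2.trans h3.symm)) hbc
  · exact absurd (iac (h1.trans h3.symm)) hac
  · exact Or.inr (Or.inr (Or.inl ⟨h1, h2, h3⟩))
  · exact absurd (iab (h1.trans h2.symm)) hab
  · exact absurd (iab (h1.trans h2.symm)) hab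
  · exact absurd (iab (h1.trans h2.symm)) hab
  · exact Or.inr (Or.inr (Or.inr (Or.inr (Or.inl ⟨h1, h2, h3⟩))))
  · exact absurd (iac (h1.trans h3.symm)) hac
  · exact absurd (ibc (h2.trans h3.symm)) hbc
  · exact absurd (ibc (h2.trans h3.symm)) hbc
  · exact Or.inr (Or.inr (Or.inr (Or.inr (Or.inr ⟨h1, h2, h3⟩))))
  · exact absurd (iac (h1.trans h3.symm)) hac
  · exact Or.inr (Or.inr (Or.inr (Or.inl ⟨h1, h2, h3⟩)))
  · exact absurd (ibc (h2.trans h3.symm)) hbc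
  · exact absurd (iac (h1.trans h3.symm)) hac
  · exact absurd (iab (h1.trans h2.symm)) hab
  · exact absurd (iab (h1.trans h2.symm)) hab
  · exact absurd (iab (h1.trans h2.symm)) hab

variable {n : ℕ} {Ω : Type*} (C : Ctx n Ω)

/-- fix-point-free hypothesis for small-support elements -/
def Ctx.FPF : Prop :=
  ∀ (σ : Equiv.Perm (Fin n)) (hσ : σ ∈ C.H), σ ≠ 1 → σ.support.card + 5 ≤ n →
    ∀ ω : Ω, C.ψ ⟨σ, hσ⟩ ω ≠ ω

/-- exactness: a nontrivial element fixing `a, b, c` fixes nothing else -/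
lemma Ctx.exact3 {x : Equiv.Perm (Fin n)} (hxH : x ∈ C.H) (hx1 : x ≠ 1) {a b c : Ω}
    (hab : a ≠ b) (hac : a ≠ c) (hbc : b ≠ c)
    (hxa : C.ψ ⟨x, hxH⟩ a = a) (hxb : C.ψ ⟨x, hxH⟩ b = b) (hxc : C.ψ ⟨x, hxH⟩ c = c)
    {ω : Ω} (hω : C.ψ ⟨x, hxH⟩ ω = ω) : ω = a ∨ ω = b ∨ ω = c := by
  by_contra hno
  push_neg at hno
  obtain ⟨h1, h2, h3⟩ := hno
  exact C.ne_one hx1 (C.h4 ⟨x, hxH⟩ ω a b c h1 h2 h3 hab hac hbc hω hxa hxb hxc)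

/-- small elements of the centralizer of a three-point-fixing element have order 3
and cycle the three points -/
lemma Ctx.C1 (hn : 11 ≤ n) (hFPF : C.FPF) {a b c : Ω}
    (hab : a ≠ b) (hac : a ≠ c) (hbc : b ≠ c)
    {x : Equiv.Perm (Fin n)} (hxH : x ∈ C.H) (hx1 : x ≠ 1)
    (hxa : C.ψ ⟨x, hxH⟩ a = a) (hxb : C.ψ ⟨x, hxH⟩ b = b) (hxc : C.ψ ⟨x, hxH⟩ c = c)
    {cp : Equiv.Perm (Fin n)} (hcH : cp ∈ C.H) (hc1 : cp ≠ 1)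
    (hsmall : cp.support.card + 5 ≤ n) (hcomm : Commute cp x) :
    cp ^ 3 = 1 ∧
    ((C.ψ ⟨cp, hcH⟩ a = b ∧ C.ψ ⟨cp, hcH⟩ b = c ∧ C.ψ ⟨cp, hcH⟩ c = a) ∨
     (C.ψ ⟨cp, hcH⟩ a = c ∧ C.ψ ⟨cp, hcH⟩ b = a ∧ C.ψ ⟨cp, hcH⟩ c = b)) := by
  have hcommS : (⟨cp, hcH⟩ : C.H) * ⟨x, hxH⟩ = ⟨x, hxH⟩ * ⟨cp, hcH⟩ := Subtype.ext hcomm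
  set π := C.ψ ⟨cp, hcH⟩ with hπ
  have hmaps : ∀ δ : Ω, C.ψ ⟨x, hxH⟩ δ = δ → C.ψ ⟨x, hxH⟩ (π δ) = π δ := by
    intro δ hδ
    have : C.ψ ⟨x, hxH⟩ (C.ψ ⟨cp, hcH⟩ δ) = C.ψ ⟨cp, hcH⟩ (C.ψ ⟨x, hxH⟩ δ) := by
      rw [← C.psi_mul, ← C.psi_mul, hcommS]
    rw [hπ, this, hδ]
  have hfree : ∀ δ : Ω, π δ ≠ δ := fun δ => hFPF cp hcH hc1 hsmall δ
  have horb := orb3 π hab hac hbc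
    (C.exact3 hxH hx1 hab hac hbc hxa hxb hxc (hmaps a hxa))
    (C.exact3 hxH hx1 hab hac hbc hxa hxb hxc (hmaps b hxb))
    (C.exact3 hxH hx1 hab hac hbc hxa hxb hxc (hmaps c hxc))
  have hcube : ∀ δ : Ω, π (π (π δ)) = δ → cp ^ 3 = 1 := by
    intro δ hδ
    by_contra hne
    refine hFPF (cp ^ 3) (pow_mem hcH 3) hne ?_ δ ?_
    · have := Finset.card_le_card (Equiv.Perm.support_pow_le cp 3)
      omega
    · have : (⟨cp ^ 3, pow_mem hcH 3⟩ : C.H) = ⟨cp, hcH⟩ ^ 3 := by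
        apply Subtype.ext; simp
      rw [this, map_pow]
      show ((π : Equiv.Perm Ω) ^ 3) δ = δ
      rw [show (3 : ℕ) = 2 + 1 from rfl, pow_succ, pow_succ, pow_one]
      simpa [Equiv.Perm.mul_apply] using hδ
  rcases horb with ⟨h1, _, _⟩ | ⟨h1, _, _⟩ | ⟨_, _, h3⟩ | ⟨_, h2, _⟩ |
    ⟨h1, h2, h3⟩ | ⟨h1, h2, h3⟩
  · exact absurd h1 (hfree a)
  · exact absurd h1 (hfree a)
  · exact absurd h3 (hfree c)
  · exact absurd h2 (hfree b)
  · refine ⟨hcube a ?_, Or.inl ⟨h1, h2, h3⟩⟩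
    rw [h1, h2, h3]
  · refine ⟨hcube a ?_, Or.inr ⟨h1, h2, h3⟩⟩
    rw [h1, h3, h2]

/-- two disjoint small elements of the centralizer give a contradiction -/
lemma Ctx.C2 (hn : 11 ≤ n) (hFPF : C.FPF) {a b c : Ω}
    (hab : a ≠ b) (hac : a ≠ c) (hbc : b ≠ c)
    {x : Equiv.Perm (Fin n)} (hxH : x ∈ C.H) (hx1 : x ≠ 1)
    (hxa : C.ψ ⟨x, hxH⟩ a = a) (hxb : C.ψ ⟨x, hxH⟩ b = b) (hxc : C.ψ ⟨x, hxH⟩ c = c)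
    {c1 c2 : Equiv.Perm (Fin n)} (h1H : c1 ∈ C.H) (h2H : c2 ∈ C.H)
    (h11 : c1 ≠ 1) (h21 : c2 ≠ 1)
    (hsum : c1.support.card + c2.support.card + 5 ≤ n)
    (hcm1 : Commute c1 x) (hcm2 : Commute c2 x)
    (hdisj : Equiv.Perm.Disjoint c1 c2) : False := by
  have hsm1 : c1.support.card + 5 ≤ n := by
    have := (h21 <| Equiv.Perm.card_support_le_one.mp <| Nat.le_of_lt_succ ·)
    have h2pos : 2 ≤ c2.support.card := Equiv.Perm.two_le_card_support_of_ne_one h21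
    omega
  have hsm2 : c2.support.card + 5 ≤ n := by
    have h1pos : 2 ≤ c1.support.card := Equiv.Perm.two_le_card_support_of_ne_one h11
    omega
  obtain ⟨-, ho1⟩ := C.C1 hn hFPF hab hac hbc hxH hx1 hxa hxb hxc h1H h11 hsm1 hcm1
  obtain ⟨-, ho2⟩ := C.C1 hn hFPF hab hac hbc hxH hx1 hxa hxb hxc h2H h21 hsm2 hcm2
  -- a point moved by c1 but fixed by c2
  obtain ⟨t, ht⟩ := Finset.card_pos.mp
    (lt_of_lt_of_le (by omega) (Equiv.Perm.two_le_card_support_of_ne_one h11))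
  have htm : c1 t ≠ t := Equiv.Perm.mem_support.mp ht
  have htf : c2 t = t := (hdisj t).resolve_left htm
  -- choose the combination
  have main : ∀ (z : Equiv.Perm (Fin n)) (hzH : z ∈ C.H), z ≠ 1 → z.support ⊆
      c1.support ∪ c2.support → C.ψ ⟨z, hzH⟩ a = a → False := by
    intro z hzH hz1 hzsupp hza
    refine hFPF z hzH hz1 ?_ a hza
    have hc := Finset.card_le_card hzsupp
    have hcu := Finset.card_union_le c1.support c2.support
    omega
  have hz1ne : (c1 * c2) ≠ 1 := by
    intro h
    have : (c1 * c2) t = t := by rw [h]; rfl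
    rw [Equiv.Perm.mul_apply, htf] at this
    exact htm this
  have hz2ne : (c1 * c2 * c2) ≠ 1 := by
    intro h
    have : (c1 * c2 * c2) t = t := by rw [h]; rfl
    rw [Equiv.Perm.mul_apply, Equiv.Perm.mul_apply, htf, htf] at this
    exact htm this
  have hzsupp1 : (c1 * c2).support ⊆ c1.support ∪ c2.support :=
    Equiv.Perm.support_mul_le c1 c2
  have hzsupp2 : (c1 * c2 * c2).support ⊆ c1.support ∪ c2.support := by
    intro t' ht'
    rcases Finset.mem_union.mp (Equiv.Perm.support_mul_le (c1 * c2) c2 ht') with h | h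
    · exact hzsupp1 h
    · exact Finset.mem_union_right _ h
  have hpsimul : ∀ (u v : Equiv.Perm (Fin n)) (hu : u ∈ C.H) (hv : v ∈ C.H) (ω : Ω),
      C.ψ ⟨u * v, mul_mem hu hv⟩ ω = C.ψ ⟨u, hu⟩ (C.ψ ⟨v, hv⟩ ω) := by
    intro u v hu hv ω
    have : (⟨u * v, mul_mem hu hv⟩ : C.H) = ⟨u, hu⟩ * ⟨v, hv⟩ := Subtype.ext rfl
    rw [this, C.psi_mul]
  rcases ho1 with ⟨ha1, hb1, hc1'⟩ | ⟨ha1, hb1, hc1'⟩ <;>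
    rcases ho2 with ⟨ha2, hb2, hc2'⟩ | ⟨ha2, hb2, hc2'⟩
  · -- both (a→b→c→a) : use c1 * c2 * c2
    refine main (c1 * c2 * c2) (mul_mem (mul_mem h1H h2H) h2H) hz2ne hzsupp2 ?_
    rw [hpsimul (c1 * c2) c2 (mul_mem h1H h2H) h2H, hpsimul c1 c2 h1H h2H, ha2, hb2, hc1']
  · -- (a→b→c→a) then (a→c→b→a) : use c1 * c2
    refine main (c1 * c2) (mul_mem h1H h2H) hz1ne hzsupp1 ?_
    rw [hpsimul c1 c2 h1H h2H, ha2, hc1']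
  · refine main (c1 * c2) (mul_mem h1H h2H) hz1ne hzsupp1 ?_
    rw [hpsimul c1 c2 h1H h2H, ha2, hb1]
  · refine main (c1 * c2 * c2) (mul_mem (mul_mem h1H h2H) h2H) hz2ne hzsupp2 ?_
    rw [hpsimul (c1 * c2) c2 (mul_mem h1H h2H) h2H, hpsimul c1 c2 h1H h2H, ha2, hc2', hb1]

end H3F

namespace H3F

variable {n : ℕ} {Ω : Type*} (C : Ctx n Ω)

lemma card4 {α : Type*} [DecidableEq α] {p q r s : α} :
    ({p, q, r, s} : Finset α).card ≤ 4 := by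
  apply le_trans (Finset.card_insert_le _ _)
  apply Nat.succ_le_succ
  exact card3

/-- classification of prime-order elements fixing three points, under FPF -/
lemma Ctx.primeClass (hn : 11 ≤ n) (hFPF : C.FPF) {a b c : Ω}
    (hab : a ≠ b) (hac : a ≠ c) (hbc : b ≠ c)
    {v : Equiv.Perm (Fin n)} (hvH : v ∈ C.H) (hq : (orderOf v).Prime)
    (hva : C.ψ ⟨v, hvH⟩ a = a) (hvb : C.ψ ⟨v, hvH⟩ b = b) (hvc : C.ψ ⟨v, hvH⟩ c = c) :
    v.IsCycle ∧ v.support.card = orderOf v ∧ n ≤ orderOf v + 3 ∧ 5 ≤ orderOf v := by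
  have hv1 : v ≠ 1 := by
    intro h
    rw [h, orderOf_one] at hq
    exact Nat.not_prime_one hq
  -- at most 3 points outside the support
  have hfixbound : n ≤ v.support.card + 3 := by
    by_contra hlt
    push_neg at hlt
    obtain ⟨y1, hy1⟩ := pick_out v.support (by omega)
    obtain ⟨y2, hy2⟩ := pick_out (insert y1 v.support) (by
      have := Finset.card_insert_le y1 v.support; omega)
    obtain ⟨y3, hy3⟩ := pick_out (insert y2 (insert y1 v.support)) (by
      have h1 := Finset.card_insert_le y2 (insert y1 v.support)
      have h2 := Finset.card_insert_le y1 v.support; omega)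
    obtain ⟨y4, hy4⟩ := pick_out (insert y3 (insert y2 (insert y1 v.support))) (by
      have h1 := Finset.card_insert_le y3 (insert y2 (insert y1 v.support))
      have h2 := Finset.card_insert_le y2 (insert y1 v.support)
      have h3 := Finset.card_insert_le y1 v.support; omega)
    simp only [Finset.mem_insert, not_or] at hy2 hy3 hy4
    have h12 : y1 ≠ y2 := fun h => hy2.1 h.symm
    have h13 : y1 ≠ y3 := fun h => hy3.2.1 h.symm
    have h14 : y1 ≠ y4 := fun h => hy4.2.2.1 h.symm
    have h23 : y2 ≠ y3 := fun h => hy3.1 h.symm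
    have h24 : y2 ≠ y4 := fun h => hy4.2.1 h.symm
    have h34 : y3 ≠ y4 := fun h => hy4.1 h.symm
    set vK := Equiv.swap y1 y2 * Equiv.swap y3 y4 with hvK
    have hKH : vK ∈ C.H := C.memH (by
      rw [hvK, map_mul, Equiv.Perm.sign_swap h12, Equiv.Perm.sign_swap h34]; decide)
    have hKeval : vK y1 = y2 := by
      rw [hvK, Equiv.Perm.mul_apply, Equiv.swap_apply_of_ne_of_ne h13 h14,
        Equiv.swap_apply_left]
    have hKne : vK ≠ 1 := by
      intro h
      rw [h] at hKeval
      exact h12 (by simpa using hKeval)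
    have hKsupp : vK.support ⊆ {y1, y2, y3, y4} := by
      intro t ht
      by_contra hmem
      simp only [Finset.mem_insert, Finset.mem_singleton, not_or] at hmem
      refine (Equiv.Perm.mem_support.mp ht) ?_
      rw [hvK, Equiv.Perm.mul_apply, Equiv.swap_apply_of_ne_of_ne hmem.2.2.1 hmem.2.2.2,
        Equiv.swap_apply_of_ne_of_ne hmem.1 hmem.2.1]
    have hKcard : vK.support.card ≤ 4 := le_trans (Finset.card_le_card hKsupp) card4
    have hKcomm : Commute vK v := by
      apply Equiv.Perm.Disjoint.commute
      intro t
      by_cases h1 : t = y1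
      · exact Or.inr (h1 ▸ Equiv.Perm.notMem_support.mp hy1)
      by_cases h2 : t = y2
      · exact Or.inr (h2 ▸ Equiv.Perm.notMem_support.mp hy2.2)
      by_cases h3 : t = y3
      · exact Or.inr (h3 ▸ Equiv.Perm.notMem_support.mp hy3.2.2)
      by_cases h4 : t = y4
      · exact Or.inr (h4 ▸ Equiv.Perm.notMem_support.mp hy4.2.2.2)
      · refine Or.inl ?_
        rw [hvK, Equiv.Perm.mul_apply, Equiv.swap_apply_of_ne_of_ne h3 h4,
          Equiv.swap_apply_of_ne_of_ne h1 h2]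
    have hKsq : vK ^ 2 = 1 := by
      have hcsw : Commute (Equiv.swap y1 y2) (Equiv.swap y3 y4) := by
        apply Equiv.Perm.Disjoint.commute
        intro t
        by_cases h1 : t = y3
        · exact Or.inl (by rw [h1]; exact Equiv.swap_apply_of_ne_of_ne h13.symm h23.symm)
        by_cases h2 : t = y4
        · exact Or.inl (by rw [h2]; exact Equiv.swap_apply_of_ne_of_ne h14.symm h24.symm)
        · exact Or.inr (Equiv.swap_apply_of_ne_of_ne h1 h2)
      rw [hvK, hcsw.mul_pow, pow_two, pow_two, Equiv.swap_mul_self, Equiv.swap_mul_self,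
        one_mul]
    obtain ⟨hK3, -⟩ := C.C1 hn hFPF hab hac hbc hvH hv1 hva hvb hvc hKH hKne
      (by omega) hKcomm
    rw [pow_succ, hKsq, one_mul] at hK3
    exact hKne hK3
  obtain ⟨k0, hk⟩ := Equiv.Perm.cycleType_prime_order hq
  have hsupp : v.support.card = (k0 + 1) * orderOf v := by
    rw [← Equiv.Perm.sum_cycleType, hk, Multiset.sum_replicate, smul_eq_mul]
  have hsuppn : v.support.card ≤ n := by
    have := Finset.card_le_univ v.support
    simpa [Fintype.card_fin] using this
  have hq2 : 2 ≤ orderOf v := hq.two_le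
  have hqne4 : orderOf v ≠ 4 := by
    intro h
    rw [h] at hq
    norm_num at hq
  rcases Nat.eq_zero_or_pos k0 with hk0 | hk0
  · have hcyc : v.IsCycle := Equiv.Perm.card_cycleType_eq_one.mp
      (by rw [hk, Multiset.card_replicate, hk0])
    have hcard : v.support.card = orderOf v := by rw [hsupp, hk0]; ring
    have hq5 : 5 ≤ orderOf v := by
      by_contra hlt2
      push_neg at hlt2
      exact hFPF v hvH hv1 (by omega) a hva
    exact ⟨hcyc, hcard, by omega, hq5⟩
  · exfalso
    have hcardfac : 1 < v.cycleFactorsFinset.card := by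
      have h1 : Multiset.card v.cycleType = k0 + 1 := by rw [hk, Multiset.card_replicate]
      rw [Equiv.Perm.cycleType_def, Multiset.card_map] at h1
      have h2 : v.cycleFactorsFinset.card = k0 + 1 := h1
      omega
    obtain ⟨f1, hf1m, f2, hf2m, hfne⟩ := Finset.one_lt_card.mp hcardfac
    have hfc : ∀ f ∈ v.cycleFactorsFinset, f.support.card = orderOf v := by
      intro f hf
      have h1 : f.support.card ∈ v.cycleType := by
        rw [Equiv.Perm.cycleType_def]
        exact Multiset.mem_map_of_mem _ hf
      rw [hk] at h1
      exact Multiset.eq_of_mem_replicate h1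
    have hcyc1 : f1.IsCycle := (Equiv.Perm.mem_cycleFactorsFinset_iff.mp hf1m).1
    have hcyc2 : f2.IsCycle := (Equiv.Perm.mem_cycleFactorsFinset_iff.mp hf2m).1
    have hcm1 : Commute f1 v := Equiv.Perm.self_mem_cycle_factors_commute hf1m
    have hcm2 : Commute f2 v := Equiv.Perm.self_mem_cycle_factors_commute hf2m
    have hdj : Equiv.Perm.Disjoint f1 f2 :=
      Equiv.Perm.cycleFactorsFinset_pairwise_disjoint v (Finset.mem_coe.mpr hf1m)
        (Finset.mem_coe.mpr hf2m) hfne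
    have hf1c := hfc f1 hf1m
    have hf2c := hfc f2 hf2m
    have hof1 : orderOf f1 = orderOf v := by rw [hcyc1.orderOf, hf1c]
    by_cases hq2e : orderOf v = 2
    · -- q = 2 : product of two transpositions
      set z := f1 * f2 with hz
      have hsgn1 : Equiv.Perm.sign f1 = -1 := by
        rw [hcyc1.sign, hf1c, hq2e]; decide
      have hsgn2 : Equiv.Perm.sign f2 = -1 := by
        rw [hcyc2.sign, hf2c, hq2e]; decide
      have hzH : z ∈ C.H := C.memH (by rw [hz, map_mul, hsgn1, hsgn2]; decide)
      obtain ⟨t, ht⟩ := Finset.card_pos.mp (show 0 < f1.support.card by omega)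
      have htm : f1 t ≠ t := Equiv.Perm.mem_support.mp ht
      have htf : f2 t = t := (hdj t).resolve_left htm
      have hzne : z ≠ 1 := by
        intro h
        have : z t = t := by rw [h]; rfl
        rw [hz, Equiv.Perm.mul_apply, htf] at this
        exact htm this
      have hzsq : z ^ 2 = 1 := by
        have h1 : f1 ^ 2 = 1 := by
          rw [show (2 : ℕ) = orderOf f1 by rw [hof1, hq2e]]
          exact pow_orderOf_eq_one f1
        have h2 : f2 ^ 2 = 1 := by
          rw [show (2 : ℕ) = orderOf f2 by rw [hcyc2.orderOf, hf2c, hq2e]]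
          exact pow_orderOf_eq_one f2
        rw [hz, (hdj.commute).mul_pow, h1, h2, one_mul]
      have hzsupp : z.support.card ≤ 4 := by
        have h0 : z.support ⊆ f1.support ∪ f2.support := by
          rw [hz, ← Finset.sup_eq_union]
          exact Equiv.Perm.support_mul_le f1 f2
        have h1 := Finset.card_le_card h0
        have h2 := Finset.card_union_le f1.support f2.support
        omega
      obtain ⟨hz3, -⟩ := C.C1 hn hFPF hab hac hbc hvH hv1 hva hvb hvc hzH hzne
        (by omega) (hcm1.mul_left hcm2)
      rw [pow_succ, hzsq, one_mul] at hz3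
      exact hzne hz3
    by_cases hq3e : orderOf v = 3
    · -- q = 3 : two disjoint 3-cycles
      have hsgn1 : Equiv.Perm.sign f1 = 1 := by
        rw [hcyc1.sign, hf1c, hq3e]; decide
      have hsgn2 : Equiv.Perm.sign f2 = 1 := by
        rw [hcyc2.sign, hf2c, hq3e]; decide
      exact C.C2 hn hFPF hab hac hbc hvH hv1 hva hvb hvc (C.memH hsgn1) (C.memH hsgn2)
        hcyc1.ne_one hcyc2.ne_one (by omega) hcm1 hcm2 hdj
    · -- q ≥ 5 : a single cycle of the factorization
      have hq5 : 5 ≤ orderOf v := by omega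
      have hodd : Odd (orderOf v) := hq.odd_of_ne_two hq2e
      have hsgn1 : Equiv.Perm.sign f1 = 1 := by
        rw [hcyc1.sign, hf1c, hodd.neg_one_pow]; decide
      have hsmall1 : f1.support.card + 5 ≤ n := by
        have h2q : 2 * orderOf v ≤ (k0 + 1) * orderOf v :=
          Nat.mul_le_mul_right _ (by omega)
        omega
      obtain ⟨hf13, -⟩ := C.C1 hn hFPF hab hac hbc hvH hv1 hva hvb hvc (C.memH hsgn1)
        hcyc1.ne_one hsmall1 hcm1
      have hdvd : orderOf f1 ∣ 3 := orderOf_dvd_of_pow_eq_one hf13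
      rw [hof1] at hdvd
      have := Nat.le_of_dvd (by norm_num) hdvd
      omega

end H3F

namespace H3F

open Equiv

/-- construction of a normalizing element of order `(q-1)/2` for a `q`-cycle -/
lemma cycleConj {n : ℕ} {h : Equiv.Perm (Fin n)} (hcyc : h.IsCycle)
    {q : ℕ} (hq : q.Prime) (hord : orderOf h = q) (h11 : 11 ≤ q) :
    ∃ u : Equiv.Perm (Fin n), Equiv.Perm.sign u = 1 ∧ orderOf u = (q - 1) / 2 ∧
      ∃ m : ℕ, u⁻¹ * h * u = h ^ m := by
  haveI : NeZero q := ⟨hq.ne_zero⟩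
  haveI : Fact q.Prime := ⟨hq⟩
  obtain ⟨x₀, hx0ne, -⟩ := id hcyc
  have hx0mem : x₀ ∈ h.support := Equiv.Perm.mem_support.mpr hx0ne
  -- the parametrization of the support
  set φ : ZMod q → Fin n := fun i => (h ^ i.val) x₀ with hφ
  have hφS : ∀ i, φ i ∈ h.support := by
    intro i
    exact Equiv.Perm.pow_apply_mem_support.mpr hx0mem
  have hker : ∀ k : ℕ, (h ^ k) x₀ = x₀ ↔ q ∣ k := by
    intro k
    rw [← hcyc.pow_eq_one_iff' hx0ne, ← hord, orderOf_dvd_iff_pow_eq_one]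
  have hφmod : ∀ k : ℕ, (h ^ k) x₀ = (h ^ (k % q)) x₀ := by
    intro k
    rw [← hord, pow_mod_orderOf]
  have hpow : ∀ (k : ℕ) (i : ZMod q), (h ^ k) (φ i) = φ (i + (k : ZMod q)) := by
    intro k i
    rw [hφ]
    simp only
    rw [← Equiv.Perm.mul_apply, ← pow_add]
    have hval : (i + (k : ZMod q)).val = (i.val + k) % q := by
      rw [ZMod.val_add, ZMod.val_natCast]
      exact (Nat.mod_modEq k q).add_left i.val
    rw [hval, ← hφmod (i.val + k), Nat.add_comm]
  have hφinj : Function.Injective φ := by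
    have key2 : ∀ i j : ZMod q, i.val ≤ j.val → φ i = φ j → i = j := by
      intro i j hle hij
      have h1 : (h ^ i.val) ((h ^ (j.val - i.val)) x₀) = (h ^ i.val) x₀ := by
        rw [← Equiv.Perm.mul_apply, ← pow_add]
        rw [show i.val + (j.val - i.val) = j.val from by omega]
        exact hij.symm
      have h2 : (h ^ (j.val - i.val)) x₀ = x₀ := (h ^ i.val).injective h1
      have h3 : q ∣ j.val - i.val := (hker _).mp h2
      have h4 : j.val < q := ZMod.val_lt j
      have h5 : j.val - i.val = 0 := by
        by_contra hne
        have := Nat.le_of_dvd (Nat.pos_of_ne_zero hne) h3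
        omega
      exact ZMod.val_injective q (by omega)
    intro i j hij
    rcases le_total i.val j.val with hle | hle
    · exact key2 i j hle hij
    · exact (key2 j i hle hij.symm).symm
  -- the equivalence with the support
  have hbij : Function.Bijective (fun i : ZMod q => (⟨φ i, hφS i⟩ : {x // x ∈ h.support})) := by
    rw [Fintype.bijective_iff_injective_and_card]
    constructor
    · intro i j hij
      exact hφinj (congrArg Subtype.val hij)
    · rw [ZMod.card, Fintype.card_coe, hcyc.orderOf] at *
      omega
  set ε : ZMod q ≃ {x : Fin n // x ∈ h.support} := Equiv.ofBijective _ hbij with hε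
  have hεval : ∀ i, (ε i : Fin n) = φ i := fun i => rfl
  -- the cyclic generator
  obtain ⟨g₁, hg₁⟩ := IsCyclic.exists_generator (α := (ZMod q)ˣ)
  have hg₁ord : orderOf g₁ = q - 1 := by
    rw [orderOf_eq_card_of_forall_mem_zpowers hg₁, Nat.card_eq_fintype_card, ZMod.card_units]
  -- the homomorphism
  set Φ : (ZMod q)ˣ →* Equiv.Perm (Fin n) :=
    (Equiv.Perm.extendDomainHom ε).comp (MulAction.toPermHom (ZMod q)ˣ (ZMod q)) with hΦ
  have hΦinj : Function.Injective Φ := by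
    rw [injective_iff_map_eq_one]
    intro w hw
    rw [hΦ, MonoidHom.comp_apply] at hw
    have h1 : MulAction.toPermHom (ZMod q)ˣ (ZMod q) w = 1 :=
      Equiv.Perm.extendDomainHom_injective ε (by rw [hw, map_one])
    have h2 : w • (1 : ZMod q) = 1 := by
      have := DFunLike.congr_fun h1 (1 : ZMod q)
      simpa using this
    have h2' : (w : ZMod q) = 1 := by simpa [Units.smul_def] using h2
    exact Units.ext h2'
  have hΦapp : ∀ (w : (ZMod q)ˣ) (i : ZMod q), Φ w (φ i) = φ ((w : ZMod q) * i) := by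
    intro w i
    rw [hΦ]
    simp only [MonoidHom.comp_apply, Equiv.Perm.extendDomainHom_apply]
    have : φ i = ((ε i : {x : Fin n // x ∈ h.support}) : Fin n) := rfl
    rw [this, Equiv.Perm.extendDomain_apply_image]
    have : MulAction.toPermHom (ZMod q)ˣ (ZMod q) w i = (w : ZMod q) * i := rfl
    rw [this]
    rfl
  have hΦout : ∀ (w : (ZMod q)ˣ) (t : Fin n), t ∉ h.support → Φ w t = t := by
    intro w t ht
    rw [hΦ]
    simp only [MonoidHom.comp_apply, Equiv.Perm.extendDomainHom_apply]
    exact Equiv.Perm.extendDomain_apply_not_subtype _ _ ht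
  -- the element u
  refine ⟨Φ (g₁ ^ 2), ?_, ?_, ?_⟩
  · rw [map_pow, map_pow]
    exact Int.units_sq (Equiv.Perm.sign (Φ g₁))
  · rw [orderOf_injective Φ hΦinj, orderOf_pow, hg₁ord]
    congr 1
    have heven : 2 ∣ q - 1 := by
      have hodd : Odd q := hq.odd_of_ne_two (by omega)
      obtain ⟨t, ht⟩ := hodd
      omega
    exact Nat.dvd_antisymm (Nat.gcd_dvd_right _ _) (Nat.dvd_gcd heven dvd_rfl)
  · -- the conjugation relation
    set w : (ZMod q)ˣ := g₁ ^ 2 with hw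
    have hwu : ((w⁻¹ : (ZMod q)ˣ) : ZMod q) * ((w : (ZMod q)ˣ) : ZMod q) = 1 := by
      rw [← Units.val_mul, inv_mul_cancel, Units.val_one]
    refine ⟨(((w⁻¹ : (ZMod q)ˣ) : ZMod q)).val, ?_⟩
    have hWinv : (Φ w)⁻¹ = Φ w⁻¹ := (map_inv Φ w).symm
    ext t
    simp only [Equiv.Perm.mul_apply]
    by_cases ht : t ∈ h.support
    · obtain ⟨i, hi⟩ := (Equiv.ofBijective _ hbij).surjective ⟨t, ht⟩
      have hti : t = φ i := by rw [← hεval i, hε, hi]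
      have hstep : ∀ j : ZMod q, h (φ j) = φ (j + 1) := by
        intro j
        have := hpow 1 j
        rwa [pow_one, Nat.cast_one] at this
      have hlhs : (Φ w)⁻¹ (h (Φ w t)) = φ (i + ((w⁻¹ : (ZMod q)ˣ) : ZMod q)) := by
        rw [hti, hΦapp, hstep, hWinv, hΦapp]
        congr 1
        have : ((w⁻¹ : (ZMod q)ˣ) : ZMod q) * (((w : (ZMod q)ˣ) : ZMod q) * i + 1) =
            i + ((w⁻¹ : (ZMod q)ˣ) : ZMod q) := by
          have hcalc := hwu
          linear_combination i * hcalc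
        rw [this]
      have hrhs : (h ^ (((w⁻¹ : (ZMod q)ˣ) : ZMod q)).val) t =
          φ (i + ((w⁻¹ : (ZMod q)ˣ) : ZMod q)) := by
        rw [hti, hpow]
        congr 1
        rw [ZMod.natCast_rightInverse _]
      rw [hlhs, hrhs]
    · have h1 : Φ w t = t := hΦout w t ht
      have h2 : h t = t := Equiv.Perm.notMem_support.mp ht
      have h3 : (Φ w)⁻¹ t = t := by
        rw [hWinv]
        exact hΦout w⁻¹ t ht
      have h4 : (h ^ (((w⁻¹ : (ZMod q)ˣ) : ZMod q)).val) t = t := by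
        refine Equiv.Perm.notMem_support.mp (fun hmem => ht ?_)
        exact Equiv.Perm.support_pow_le h _ hmem
      rw [h1, h2, h3, h4]

end H3F

namespace H3F

lemma prime_power {n : ℕ} {x : Equiv.Perm (Fin n)} (hx : x ≠ 1) :
    ∃ k : ℕ, (orderOf (x ^ k)).Prime ∧ orderOf (x ^ k) ∣ orderOf x := by
  have hN : orderOf x ≠ 1 := by simpa [orderOf_eq_one_iff] using hx
  have hNpos : 0 < orderOf x := orderOf_pos x
  have hp : (orderOf x).minFac.Prime := Nat.minFac_prime hN
  have hdvd : (orderOf x).minFac ∣ orderOf x := Nat.minFac_dvd _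
  have hpow : (x ^ (orderOf x / (orderOf x).minFac)) ^ (orderOf x).minFac = 1 := by
    rw [← pow_mul, Nat.div_mul_cancel hdvd]
    exact pow_orderOf_eq_one x
  have hne : x ^ (orderOf x / (orderOf x).minFac) ≠ 1 := by
    intro h
    have hdvd2 : orderOf x ∣ orderOf x / (orderOf x).minFac := orderOf_dvd_of_pow_eq_one h
    have h1 : 0 < orderOf x / (orderOf x).minFac :=
      Nat.div_pos (Nat.minFac_le hNpos) hp.pos
    have h2 := Nat.le_of_dvd h1 hdvd2
    have h3 : orderOf x / (orderOf x).minFac < orderOf x :=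
      Nat.div_lt_self hNpos hp.one_lt
    omega
  have hord2 : orderOf (x ^ (orderOf x / (orderOf x).minFac)) = (orderOf x).minFac := by
    have hd := orderOf_dvd_of_pow_eq_one hpow
    rcases Nat.Prime.eq_one_or_self_of_dvd hp _ hd with h | h
    · exact absurd (orderOf_eq_one_iff.mp h) hne
    · exact h
  exact ⟨orderOf x / (orderOf x).minFac, by rw [hord2]; exact hp, by rw [hord2]; exact hdvd⟩

variable {n : ℕ} {Ω : Type*} (C : Ctx n Ω)

lemma Ctx.fix_pow (τ : C.H) (k : ℕ) {ω : Ω} (hω : C.ψ τ ω = ω) : C.ψ (τ ^ k) ω = ω := by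
  rw [map_pow]
  induction k with
  | zero => simp
  | succ k ih =>
    rw [pow_succ, Equiv.Perm.mul_apply, hω]
    exact ih

/-- the FPF case is impossible -/
lemma Ctx.FPF_case (hn : 11 ≤ n) (hFPF : C.FPF)
    {σ₀ : C.H} (hσ₀ : σ₀ ≠ 1) {a b c : Ω} (hab : a ≠ b) (hac : a ≠ c) (hbc : b ≠ c)
    (ha : C.ψ σ₀ a = a) (hb : C.ψ σ₀ b = b) (hc : C.ψ σ₀ c = c) : False := by
  have hv₀H : (σ₀ : Equiv.Perm (Fin n)) ∈ C.H := σ₀.2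
  have hv₀ : (σ₀ : Equiv.Perm (Fin n)) ≠ 1 := fun h => hσ₀ (Subtype.ext h)
  obtain ⟨k1, hp1, hdvd1⟩ := prime_power hv₀
  set h := (σ₀ : Equiv.Perm (Fin n)) ^ k1 with hh
  have hhH : h ∈ C.H := pow_mem hv₀H k1
  have hsub : (⟨h, hhH⟩ : C.H) = σ₀ ^ k1 := by
    apply Subtype.ext
    simp [hh]
  have hfa : C.ψ ⟨h, hhH⟩ a = a := by rw [hsub]; exact C.fix_pow σ₀ k1 ha
  have hfb : C.ψ ⟨h, hhH⟩ b = b := by rw [hsub]; exact C.fix_pow σ₀ k1 hb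
  have hfc : C.ψ ⟨h, hhH⟩ c = c := by rw [hsub]; exact C.fix_pow σ₀ k1 hc
  obtain ⟨hcyc, hsupp, hnle, hq5⟩ := C.primeClass hn hFPF hab hac hbc hhH hp1 hfa hfb hfc
  have hune : h ≠ 1 := by
    intro hh1
    rw [hh1, orderOf_one] at hp1
    exact Nat.not_prime_one hp1
  have hqn : orderOf h ≤ n := by
    rw [← hsupp]
    have := Finset.card_le_univ h.support
    simpa [Fintype.card_fin] using this
  have hq11 : 11 ≤ orderOf h := by
    by_contra hlt
    push_neg at hlt
    have h89 : orderOf h = 8 ∨ orderOf h = 9 ∨ orderOf h = 10 := by omega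
    rcases h89 with h9 | h9 | h9 <;> rw [h9] at hp1 <;> norm_num at hp1
  obtain ⟨u, husign, huord, m, hconj⟩ := cycleConj hcyc hp1 rfl hq11
  have huH : u ∈ C.H := C.memH husign
  -- u preserves the fixed points of h
  have hmul : h * u = u * h ^ m := by
    calc h * u = u * (u⁻¹ * h * u) := by group
    _ = u * h ^ m := by rw [hconj]
  have hpres : ∀ δ : Ω, C.ψ ⟨h, hhH⟩ δ = δ →
      C.ψ ⟨h, hhH⟩ (C.ψ ⟨u, huH⟩ δ) = C.ψ ⟨u, huH⟩ δ := by
    intro δ hδ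
    have e1 : (⟨h, hhH⟩ : C.H) * ⟨u, huH⟩ = ⟨u, huH⟩ * ⟨h ^ m, pow_mem hhH m⟩ :=
      Subtype.ext hmul
    have e2 : (⟨h ^ m, pow_mem hhH m⟩ : C.H) = ⟨h, hhH⟩ ^ m := by
      apply Subtype.ext; simp
    rw [← C.psi_mul, e1, C.psi_mul, e2, C.fix_pow _ m hδ]
  set π := C.ψ ⟨u, huH⟩ with hπ
  have horb := orb3 π hab hac hbc
    (C.exact3 hhH hune hab hac hbc hfa hfb hfc (hpres a hfa))
    (C.exact3 hhH hune hab hac hbc hfa hfb hfc (hpres b hfb))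
    (C.exact3 hhH hune hab hac hbc hfa hfb hfc (hpres c hfc))
  have e2 : ∀ δ, C.ψ ⟨u ^ 2, pow_mem huH 2⟩ δ = π (π δ) := by
    intro δ
    have : (⟨u ^ 2, pow_mem huH 2⟩ : C.H) = ⟨u, huH⟩ * ⟨u, huH⟩ := by
      apply Subtype.ext
      simp only [Subgroup.coe_mul]
      rw [pow_two]
    rw [this, C.psi_mul, hπ]
  have e3 : ∀ δ, C.ψ ⟨u ^ 3, pow_mem huH 3⟩ δ = π (π (π δ)) := by
    intro δ
    have : (⟨u ^ 3, pow_mem huH 3⟩ : C.H) = ⟨u, huH⟩ * ⟨u, huH⟩ * ⟨u, huH⟩ := by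
      apply Subtype.ext
      simp only [Subgroup.coe_mul]
      rw [pow_succ, pow_two]
    rw [this, C.psi_mul, C.psi_mul, hπ]
  have hofix : ∃ o : ℕ, 0 < o ∧ o ≤ 3 ∧ C.ψ ⟨u ^ o, pow_mem huH o⟩ a = a ∧
      C.ψ ⟨u ^ o, pow_mem huH o⟩ b = b ∧ C.ψ ⟨u ^ o, pow_mem huH o⟩ c = c := by
    rcases horb with ⟨h1, h2, h3⟩ | ⟨h1, h2, h3⟩ | ⟨h1, h2, h3⟩ | ⟨h1, h2, h3⟩ |
      ⟨h1, h2, h3⟩ | ⟨h1, h2, h3⟩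
    · exact ⟨2, by omega, by omega, by rw [e2, h1, h1], by rw [e2, h2, h2],
        by rw [e2, h3, h3]⟩
    · exact ⟨2, by omega, by omega, by rw [e2, h1, h1], by rw [e2, h2, h3],
        by rw [e2, h3, h2]⟩
    · exact ⟨2, by omega, by omega, by rw [e2, h1, h2], by rw [e2, h2, h1],
        by rw [e2, h3, h3]⟩
    · exact ⟨2, by omega, by omega, by rw [e2, h1, h3], by rw [e2, h2, h2],
        by rw [e2, h3, h1]⟩
    · exact ⟨3, by omega, by omega, by rw [e3, h1, h2, h3], by rw [e3, h2, h3, h1],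
        by rw [e3, h3, h1, h2]⟩
    · exact ⟨3, by omega, by omega, by rw [e3, h1, h3, h2], by rw [e3, h2, h1, h3],
        by rw [e3, h3, h2, h1]⟩
  obtain ⟨o, hopos, hole, hya, hyb, hyc⟩ := hofix
  have hdhalf : 2 * orderOf u ≤ orderOf h - 1 ∧ 5 ≤ orderOf u := by
    constructor
    · rw [huord]; omega
    · rw [huord]; omega
  have hyne : u ^ o ≠ 1 := by
    intro hy1
    have := orderOf_dvd_of_pow_eq_one hy1
    have hle := Nat.le_of_dvd hopos this
    omega
  obtain ⟨k2, hp2, hdvd2⟩ := prime_power hyne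
  set vfin := (u ^ o) ^ k2 with hvfin
  have hvH : vfin ∈ C.H := pow_mem (pow_mem huH o) k2
  have hvsub : (⟨vfin, hvH⟩ : C.H) = ⟨u ^ o, pow_mem huH o⟩ ^ k2 := by
    apply Subtype.ext; simp [hvfin]
  have hva : C.ψ ⟨vfin, hvH⟩ a = a := by rw [hvsub]; exact C.fix_pow _ k2 hya
  have hvb : C.ψ ⟨vfin, hvH⟩ b = b := by rw [hvsub]; exact C.fix_pow _ k2 hyb
  have hvc : C.ψ ⟨vfin, hvH⟩ c = c := by rw [hvsub]; exact C.fix_pow _ k2 hyc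
  obtain ⟨-, -, hnle2, -⟩ := C.primeClass hn hFPF hab hac hbc hvH hp2 hva hvb hvc
  -- arithmetic contradiction
  have hdvd3 : orderOf vfin ∣ orderOf u := hdvd2.trans (orderOf_pow_dvd o)
  have hfinle : orderOf vfin ≤ orderOf u := Nat.le_of_dvd (by omega) hdvd3
  omega

end H3F

namespace H3F

variable {n : ℕ} {Ω : Type*} (C : Ctx n Ω)

/-- the master lemma -/
lemma Ctx.master (hn : 11 ≤ n)
    (htrans : ∀ ω ω' : Ω, ∃ τ : C.H, C.ψ τ ω = ω')
    (hex : ∃ σ : C.H, σ ≠ 1 ∧ ∃ a b c : Ω, a ≠ b ∧ a ≠ c ∧ b ≠ c ∧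
      C.ψ σ a = a ∧ C.ψ σ b = b ∧ C.ψ σ c = c) : False := by
  obtain ⟨σ₀, hσ₀, a, b, c, hab, hac, hbc, ha, hb, hc⟩ := hex
  by_cases hFPF : C.FPF
  · exact C.FPF_case hn hFPF hσ₀ hab hac hbc ha hb hc
  · rw [Ctx.FPF] at hFPF
    push_neg at hFPF
    obtain ⟨σ, hσH, hσ1, hsmall, ω₁, hω₁⟩ := hFPF
    exact C.notFPF hn htrans hσH hσ1 hsmall hω₁

end H3F

lemma H3F.main_aux {n : ℕ} (hn : 11 ≤ n) {G : Type*} [Group G] {Ω : Type*} [MulAction G Ω]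
    (H : Subgroup (Equiv.Perm (Fin n))) (hle : alternatingGroup (Fin n) ≤ H)
    (e : G ≃* H) : ¬ Hyp3fix G Ω := by
  intro hyp
  obtain ⟨htr, hfaith, h4, g₀, hg₀, a, b, c, hab, hac, hbc, ha, hb, hc⟩ := hyp
  have heq1 : ∀ σ : H, e.symm σ = 1 → σ = 1 := by
    intro σ h1
    have := congrArg e h1
    rwa [MulEquiv.apply_symm_apply, map_one] at this
  set C : H3F.Ctx n Ω :=
    { H := H
      hle := hle
      ψ := (MulAction.toPermHom G Ω).comp e.symm.toMonoidHom
      hfaith := by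
        intro σ hall
        exact heq1 σ (hfaith _ (fun ω => hall ω))
      h4 := by
        intro σ a' b' c' d' h1 h2 h3 h4' h5 h6 f1 f2 f3 f4
        exact heq1 σ (h4 _ a' b' c' d' h1 h2 h3 h4' h5 h6 f1 f2 f3 f4) } with hC
  have hψ : ∀ (σ : H) (ω : Ω), C.ψ σ ω = e.symm σ • ω := fun _ _ => rfl
  refine C.master hn ?_ ?_
  · intro ω ω'
    obtain ⟨g, hg⟩ := htr.exists_smul_eq ω ω'
    refine ⟨e g, ?_⟩
    rw [hψ, MulEquiv.symm_apply_apply]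
    exact hg
  · refine ⟨e g₀, ?_, a, b, c, hab, hac, hbc, ?_, ?_, ?_⟩
    · intro h1
      apply hg₀
      have := congrArg e.symm h1
      rwa [MulEquiv.symm_apply_apply, map_one] at this
    · rw [hψ, MulEquiv.symm_apply_apply]; exact ha
    · rw [hψ, MulEquiv.symm_apply_apply]; exact hb
    · rw [hψ, MulEquiv.symm_apply_apply]; exact hc


/-- For `n ≥ 11`, if the finite group `G` is isomorphic to the alternating group
`Alt(n)` or to the symmetric group `Sym(n)`, then there is no finite set `Ω` with a
`G`-action such that `(G, Ω)` satisfies Hypothesis (3fix). -/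
theorem no_hyp3fix_of_alt_or_sym_of_eleven_le (n : ℕ) (hn : 11 ≤ n)
    (G : Type*) [Group G] [Finite G]
    (hiso : Nonempty (G ≃* alternatingGroup (Fin n)) ∨ Nonempty (G ≃* Equiv.Perm (Fin n)))
    (Ω : Type*) [Finite Ω] [MulAction G Ω] :
    ¬ Hyp3fix G Ω := by
  rcases hiso with ⟨⟨e₀⟩⟩ | ⟨⟨e₀⟩⟩
  · exact H3F.main_aux hn (alternatingGroup (Fin n)) le_rfl e₀
  · exact H3F.main_aux hn ⊤ le_top (e₀.trans Subgroup.topEquiv.symm)
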